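/- In the construction for the (⇒) direction of Lemma 3.1, if in addition 𝔉, ū ⊭ᵛ σ(φ), then: u₁ ∈ W′₁ (so W′₁ is nonempty and ū ∈ W̄′), the frame 𝔉′₁ is reflexive, and 𝔉′, ū ⊭^{v′} φ; consequently φ is refuted in a product of a reflexive 1-frame with 𝔉₂, …, 𝔉ₙ. -/

import Mathlib

namespace ModalProducts

/-- `N`-modal formulas over propositional variables indexed by `ℕ`
(the variable `pₖ` is `var k`; the extra variable `p` is `var 0`). -/
inductive MF (N : ℕ) : Type
  | var : ℕ → MF N
  | bot : MF N
  | and : MF N → MF N → MF N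
  | or  : MF N → MF N → MF N
  | imp : MF N → MF N → MF N
  | box : Fin N → MF N → MF N
deriving DecidableEq

namespace MF

variable {N : ℕ}

/-- negation: `¬ψ = ψ → ⊥`. -/
def neg (φ : MF N) : MF N := imp φ bot

/-- diamond: `◇ᵢψ = ¬□ᵢ¬ψ`. -/
def dia (i : Fin N) (φ : MF N) : MF N := neg (box i (neg φ))

/-- modal depth. -/
def md : MF N → ℕ
  | var _ => 0
  | bot => 0
  | and φ ψ => max (md φ) (md ψ)
  | or φ ψ => max (md φ) (md ψ)
  | imp φ ψ => max (md φ) (md ψ)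
  | box _ φ => md φ + 1

/-- length (number of symbols; the variable `pₖ` counts as `k+1` symbols,
accounting for the subscript). -/
def len : MF N → ℕ
  | var q => q + 1
  | bot => 1
  | and φ ψ => len φ + len ψ + 1
  | or φ ψ => len φ + len ψ + 1
  | imp φ ψ => len φ + len ψ + 1
  | box _ φ => len φ + 1

/-- the set of propositional variables occurring in a formula. -/
def vars : MF N → Set ℕ
  | var q => {q}
  | bot => ∅
  | and φ ψ => vars φ ∪ vars ψ
  | or φ ψ => vars φ ∪ vars ψ
  | imp φ ψ => vars φ ∪ vars ψ
  | box _ φ => vars φ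

/-- the largest index of a variable occurring in a formula (0 if none). -/
def maxVar : MF N → ℕ
  | var q => q
  | bot => 0
  | and φ ψ => max (maxVar φ) (maxVar ψ)
  | or φ ψ => max (maxVar φ) (maxVar ψ)
  | imp φ ψ => max (maxVar φ) (maxVar ψ)
  | box _ φ => maxVar φ

/-- the list of subformulas of a formula. -/
def subfs : MF N → List (MF N)
  | var q => [var q]
  | bot => [bot]
  | and φ ψ => and φ ψ :: (subfs φ ++ subfs ψ)
  | or φ ψ => or φ ψ :: (subfs φ ++ subfs ψ)
  | imp φ ψ => imp φ ψ :: (subfs φ ++ subfs ψ)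
  | box i φ => box i φ :: subfs φ

/-- uniform substitution of formulas for variables. -/
def subst (s : ℕ → MF N) : MF N → MF N
  | var q => s q
  | bot => bot
  | and φ ψ => and (subst s φ) (subst s ψ)
  | or φ ψ => or (subst s φ) (subst s ψ)
  | imp φ ψ => imp (subst s φ) (subst s ψ)
  | box i φ => box i (subst s φ)

end MF

/-- `θ` is a subformula of `φ`. -/
def Subformula {N : ℕ} (θ φ : MF N) : Prop := θ ∈ φ.subfs

/-- A Kripke `N`-frame: a nonempty set of points with `N` accessibility relations. -/
structure Frame (N : ℕ) where
  W : Type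
  nonempty : Nonempty W
  R : Fin N → W → W → Prop

/-- Truth of a formula at a point of a frame under a valuation. -/
def Sat {N : ℕ} (F : Frame N) (v : ℕ → Set F.W) : F.W → MF N → Prop
  | x, .var q => x ∈ v q
  | _, .bot => False
  | x, .and φ ψ => Sat F v x φ ∧ Sat F v x ψ
  | x, .or φ ψ => Sat F v x φ ∨ Sat F v x ψ
  | x, .imp φ ψ => Sat F v x φ → Sat F v x ψ
  | x, .box i φ => ∀ y, F.R i x y → Sat F v y φ

/-- Validity of a formula in a frame: truth at every point under every valuation. -/
def Valid {N : ℕ} (F : Frame N) (φ : MF N) : Prop := ∀ (v : ℕ → Set F.W) (x : F.W), Sat F v x φ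

/-- A set of formulas is valid in a frame if all of its members are. -/
def ValidSet {N : ℕ} (F : Frame N) (L : Set (MF N)) : Prop := ∀ φ ∈ L, Valid F φ

/-- The logic of a class of frames. -/
def Logic {N : ℕ} (C : Set (Frame N)) : Set (MF N) := {φ | ∀ F ∈ C, Valid F φ}

/-- A logic is Kripke complete if it is the logic of some nonempty class of frames. -/
def KripkeComplete {N : ℕ} (L : Set (MF N)) : Prop :=
  ∃ C : Set (Frame N), C.Nonempty ∧ L = Logic C

/-- The product of `N` 1-frames. -/
def prodFrame {N : ℕ} (Fs : Fin N → Frame 1) : Frame N where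
  W := ∀ i, (Fs i).W
  nonempty := ⟨fun i => (Fs i).nonempty.some⟩
  R := fun i x y => (Fs i).R 0 (x i) (y i) ∧ ∀ k, k ≠ i → x k = y k

/-- The product of `N` Kripke complete monomodal logics: the logic of the class of
products of frames of the factors. -/
def productLogic {N : ℕ} (Ls : Fin N → Set (MF 1)) : Set (MF N) :=
  Logic {F | ∃ Fs : Fin N → Frame 1, (∀ i, ValidSet (Fs i) (Ls i)) ∧ F = prodFrame Fs}

/-- A 1-frame is reflexive. -/
def ReflexiveFrame (F : Frame 1) : Prop := ∀ x, F.R 0 x x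

/-- The logic `T` of all reflexive 1-frames. -/
def logicT : Set (MF 1) := Logic {F | ReflexiveFrame F}

/-- The logic `K` of all 1-frames. -/
def logicK : Set (MF 1) := Logic Set.univ

/-- The logic `S5` of all 1-frames whose relation is an equivalence. -/
def logicS5 : Set (MF 1) := Logic {F | Equivalence (F.R 0)}

section Translation

variable {n : ℕ}

/-- the variable `p`. -/
def pv : MF (n+1) := .var 0

/-- `◆₁ψ = ◇₁(¬p ∧ ◇₁(p ∧ ψ))`. -/
def blackDia (ψ : MF (n+1)) : MF (n+1) :=
  MF.dia 0 (.and (MF.neg pv) (MF.dia 0 (.and pv ψ)))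

/-- `α_k = ◆₁ᵏ □₁ p`. -/
def alphaF (k : ℕ) : MF (n+1) := blackDia^[k] (.box 0 pv)

/-- `β_k = ¬p ∧ ◇₁(p ∧ α_k)`. -/
def betaF (k : ℕ) : MF (n+1) := .and (MF.neg pv) (MF.dia 0 (.and pv (alphaF k)))

/-- `B = β_{m+1}`. -/
def Bf (m : ℕ) : MF (n+1) := betaF (m+1)

/-- The translation `σ`: `σ(p_k) = β_k`, `σ(⊥) = ⊥`, `σ` commutes with `∧, ∨, →`,
and `σ(□ᵢψ) = □ᵢ(B → σ(ψ))`. -/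
def sigmaT (m : ℕ) : MF (n+1) → MF (n+1)
  | .var k => betaF k
  | .bot => .bot
  | .and φ ψ => .and (sigmaT m φ) (sigmaT m ψ)
  | .or φ ψ => .or (sigmaT m φ) (sigmaT m ψ)
  | .imp φ ψ => .imp (sigmaT m φ) (sigmaT m ψ)
  | .box i φ => .box i (.imp (Bf m) (sigmaT m φ))

/-- conjunction of a head formula with a list of formulas. -/
def bigAnd (ψ : MF (n+1)) (l : List (MF (n+1))) : MF (n+1) := l.foldl .and ψ

/-- `□^{≤k}`: `□^{≤0}ψ = ψ`, `□^{≤k+1}ψ = □^{≤k}ψ ∧ □₁□^{≤k}ψ ∧ … ∧ □ₙ□^{≤k}ψ`. -/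
def boxLe : ℕ → MF (n+1) → MF (n+1)
  | 0, ψ => ψ
  | k+1, ψ => bigAnd (boxLe k ψ) (List.ofFn fun i : Fin (n+1) => .box i (boxLe k ψ))

/-- `□₋₁^{≤k}`: like `□^{≤k}` but using only `□₂, …, □ₙ`. -/
def boxLeTail : ℕ → MF (n+1) → MF (n+1)
  | 0, ψ => ψ
  | k+1, ψ => bigAnd (boxLeTail k ψ) (List.ofFn fun i : Fin n => .box i.succ (boxLeTail k ψ))

/-- `◇₋₁^{≤k}ψ = ¬□₋₁^{≤k}¬ψ`. -/
def diaLeTail (k : ℕ) (ψ : MF (n+1)) : MF (n+1) := MF.neg (boxLeTail k (MF.neg ψ))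

/-- `A = B ∧ □^{≤md φ}(B → □₋₁^{≤md φ}B) ∧ □^{≤md φ}(◇₋₁^{≤md φ}B → B)`. -/
def Af (m : ℕ) (φ : MF (n+1)) : MF (n+1) :=
  .and (Bf m)
    (.and (boxLe φ.md (.imp (Bf m) (boxLeTail φ.md (Bf m))))
          (boxLe φ.md (.imp (diaLeTail φ.md (Bf m)) (Bf m))))

end Translation

end ModalProducts
namespace ModalProducts

section Restriction

variable {n : ℕ}

/-- `R̄^{≤k}`: `R̄^{≤0}` is the identity, and
`R̄^{≤k+1} = R̄^{≤k} ∪ R̄₁ ∘ R̄^{≤k} ∪ … ∪ R̄ₙ ∘ R̄^{≤k}`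
(reachability in at most `k` steps along the relations of the frame). -/
def RleAll {N : ℕ} (F : Frame N) : ℕ → F.W → F.W → Prop
  | 0 => fun x y => x = y
  | k+1 => fun x y => RleAll F k x y ∨ ∃ (i : Fin N) (z : F.W), F.R i x z ∧ RleAll F k z y

/-- `R̄₋₁^{≤k}`: reachability in at most `k` steps along `R̄₂, …, R̄ₙ` only. -/
def RleTail (F : Frame (n+1)) : ℕ → F.W → F.W → Prop
  | 0 => fun x y => x = y
  | k+1 => fun x y =>
      RleTail F k x y ∨ ∃ (i : Fin n) (z : F.W), F.R i.succ x z ∧ RleTail F k z y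

/-- The set `W′₁ = {x₁ ∈ W₁ : 𝔉, x̄ ⊨ᵛ B and x̄ ∈ R̄^{≤d}(ū)` for some `x̄ ∈ W̄` with first
coordinate `x₁}`. -/
def restrSet (Fs : Fin (n+1) → Frame 1) (m d : ℕ) (v : ℕ → Set (prodFrame Fs).W)
    (u : (prodFrame Fs).W) : Set (Fs 0).W :=
  {x1 | ∃ x : (prodFrame Fs).W, x 0 = x1 ∧ Sat (prodFrame Fs) v x (Bf m) ∧
        RleAll (prodFrame Fs) d u x}

/-- The subframe of a 1-frame induced by a nonempty set of points
(the relation is restricted to the set). -/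
def subFrame1 (F1 : Frame 1) (S : Set F1.W) (hS : S.Nonempty) : Frame 1 where
  W := S
  nonempty := ⟨⟨hS.choose, hS.choose_spec⟩⟩
  R := fun i x y => F1.R i x.val y.val

/-- The factors of the restricted product `𝔉′ = 𝔉′₁ × 𝔉₂ × … × 𝔉ₙ`,
where `𝔉′₁ = ⟨W′₁, R₁ ↾ W′₁⟩`. -/
def restrFactors (Fs : Fin (n+1) → Frame 1) (m d : ℕ) (v : ℕ → Set (prodFrame Fs).W)
    (u : (prodFrame Fs).W) (hS : (restrSet Fs m d v u).Nonempty) : Fin (n+1) → Frame 1 :=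
  Fin.cases (subFrame1 (Fs 0) (restrSet Fs m d v u) hS) (fun i => Fs i.succ)

/-- The restricted product frame `𝔉′ = 𝔉′₁ × 𝔉₂ × … × 𝔉ₙ`. -/
def restrFrame (Fs : Fin (n+1) → Frame 1) (m d : ℕ) (v : ℕ → Set (prodFrame Fs).W)
    (u : (prodFrame Fs).W) (hS : (restrSet Fs m d v u).Nonempty) : Frame (n+1) :=
  prodFrame (restrFactors Fs m d v u hS)

/-- The natural inclusion `W̄′ ⊆ W̄` of the points of `𝔉′` among those of `𝔉`. -/
def restrEmb (Fs : Fin (n+1) → Frame 1) (m d : ℕ) (v : ℕ → Set (prodFrame Fs).W)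
    (u : (prodFrame Fs).W) (hS : (restrSet Fs m d v u).Nonempty)
    (y : (restrFrame Fs m d v u hS).W) : (prodFrame Fs).W :=
  Fin.cases (motive := fun i => (Fs i).W) (y 0).val (fun i => y i.succ)

/-- A point `x̄ ∈ W̄` whose first coordinate lies in `W′₁`, viewed as a point of `W̄′`. -/
def mkRestrPt (Fs : Fin (n+1) → Frame 1) (m d : ℕ) (v : ℕ → Set (prodFrame Fs).W)
    (u : (prodFrame Fs).W) (hS : (restrSet Fs m d v u).Nonempty)
    (x : (prodFrame Fs).W) (hx : x 0 ∈ restrSet Fs m d v u) :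
    (restrFrame Fs m d v u hS).W :=
  Fin.cases (motive := fun i => ((restrFactors Fs m d v u hS) i).W)
    ⟨x 0, hx⟩ (fun i => x i.succ)

end Restriction

end ModalProducts

namespace ModalProducts

section Helpers

variable {n : ℕ}

theorem rleAll_refl {N : ℕ} (F : Frame N) (k : ℕ) (x : F.W) : RleAll F k x x := by
  induction k with
  | zero => rfl
  | succ k ih => exact Or.inl ih

theorem rleAll_succ {N : ℕ} (F : Frame N) {k : ℕ} {x y : F.W} (h : RleAll F k x y) :
    RleAll F (k+1) x y := Or.inl h

theorem rleAll_le {N : ℕ} (F : Frame N) {k k' : ℕ} (hk : k ≤ k') {x y : F.W}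
    (h : RleAll F k x y) : RleAll F k' x y := by
  induction hk with
  | refl => exact h
  | step _ ih => exact Or.inl ih

theorem rleAll_snoc {N : ℕ} (F : Frame N) {k : ℕ} {x y z : F.W} (i : Fin N)
    (h : RleAll F k x y) (hR : F.R i y z) : RleAll F (k+1) x z := by
  induction k generalizing x y z with
  | zero => cases h; exact Or.inr ⟨i, z, hR, rfl⟩
  | succ k ih =>
      rcases h with h | ⟨j, w, hjw, hw⟩
      · exact Or.inl (ih h hR)
      · exact Or.inr ⟨j, w, hjw, ih hw hR⟩

theorem rleTail_refl (F : Frame (n+1)) (k : ℕ) (x : F.W) : RleTail F k x x := by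
  induction k with
  | zero => rfl
  | succ k ih => exact Or.inl ih

theorem rleTail_le (F : Frame (n+1)) {k k' : ℕ} (hk : k ≤ k') {x y : F.W}
    (h : RleTail F k x y) : RleTail F k' x y := by
  induction hk with
  | refl => exact h
  | step _ ih => exact Or.inl ih

theorem rleTail_single (F : Frame (n+1)) {k : ℕ} (hk : 1 ≤ k) {x y : F.W} (i : Fin n)
    (hR : F.R i.succ x y) : RleTail F k x y :=
  rleTail_le F hk (Or.inr ⟨i, y, hR, rfl⟩)

theorem sat_neg (F : Frame (n+1)) (v : ℕ → Set F.W) (x : F.W) (φ : MF (n+1)) :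
    Sat F v x (MF.neg φ) ↔ ¬ Sat F v x φ := Iff.rfl

theorem sat_bigAnd (F : Frame (n+1)) (v : ℕ → Set F.W) (x : F.W) (ψ : MF (n+1))
    (l : List (MF (n+1))) :
    Sat F v x (bigAnd ψ l) ↔ Sat F v x ψ ∧ ∀ χ ∈ l, Sat F v x χ := by
  induction l generalizing ψ with
  | nil => simp [bigAnd]
  | cons χ l ih =>
      have : bigAnd ψ (χ :: l) = bigAnd (.and ψ χ) l := rfl
      rw [this, ih]
      constructor
      · rintro ⟨⟨h1, h2⟩, h3⟩
        exact ⟨h1, by simpa using ⟨h2, h3⟩⟩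
      · rintro ⟨h1, h3⟩
        simp only [List.mem_cons] at h3
        exact ⟨⟨h1, h3 χ (Or.inl rfl)⟩, fun χ' hχ' => h3 χ' (Or.inr hχ')⟩

theorem sat_boxLe (F : Frame (n+1)) (v : ℕ → Set F.W) (k : ℕ) (ψ : MF (n+1)) (x : F.W) :
    Sat F v x (boxLe k ψ) ↔ ∀ y, RleAll F k x y → Sat F v y ψ := by
  induction k generalizing x with
  | zero =>
      constructor
      · intro h y hy; cases hy; exact h
      · intro h; exact h x rfl
  | succ k ih =>
      have : boxLe (k+1) ψ = bigAnd (boxLe k ψ)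
          (List.ofFn fun i : Fin (n+1) => .box i (boxLe k ψ)) := rfl
      rw [this, sat_bigAnd]
      constructor
      · rintro ⟨h1, h2⟩ y hy
        rcases hy with hy | ⟨i, z, hiz, hz⟩
        · exact (ih x).1 h1 y hy
        · have hb := h2 (.box i (boxLe k ψ)) (List.mem_ofFn.2 ⟨i, rfl⟩)
          exact (ih z).1 (hb z hiz) y hz
      · intro h
        refine ⟨(ih x).2 fun y hy => h y (Or.inl hy), ?_⟩
        intro χ hχ
        simp only [List.mem_ofFn] at hχ
        obtain ⟨i, rfl⟩ := hχ
        intro z hz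
        exact (ih z).2 fun y hy => h y (Or.inr ⟨i, z, hz, hy⟩)

theorem sat_boxLeTail (F : Frame (n+1)) (v : ℕ → Set F.W) (k : ℕ) (ψ : MF (n+1)) (x : F.W) :
    Sat F v x (boxLeTail k ψ) ↔ ∀ y, RleTail F k x y → Sat F v y ψ := by
  induction k generalizing x with
  | zero =>
      constructor
      · intro h y hy; cases hy; exact h
      · intro h; exact h x rfl
  | succ k ih =>
      have : boxLeTail (k+1) ψ = bigAnd (boxLeTail k ψ)
          (List.ofFn fun i : Fin n => .box i.succ (boxLeTail k ψ)) := rfl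
      rw [this, sat_bigAnd]
      constructor
      · rintro ⟨h1, h2⟩ y hy
        rcases hy with hy | ⟨i, z, hiz, hz⟩
        · exact (ih x).1 h1 y hy
        · have hb := h2 (.box i.succ (boxLeTail k ψ))
            (List.mem_ofFn.2 ⟨i, rfl⟩)
          exact (ih z).1 (hb z hiz) y hz
      · intro h
        refine ⟨(ih x).2 fun y hy => h y (Or.inl hy), ?_⟩
        intro χ hχ
        simp only [List.mem_ofFn] at hχ
        obtain ⟨i, rfl⟩ := hχ
        intro z hz
        exact (ih z).2 fun y hy => h y (Or.inr ⟨i, z, hz, hy⟩)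

theorem sat_diaLeTail (F : Frame (n+1)) (v : ℕ → Set F.W) (k : ℕ) (ψ : MF (n+1)) (x : F.W) :
    Sat F v x (diaLeTail k ψ) ↔ ∃ y, RleTail F k x y ∧ Sat F v y ψ := by
  have : Sat F v x (diaLeTail k ψ) ↔ ¬ Sat F v x (boxLeTail k (MF.neg ψ)) := Iff.rfl
  rw [this, sat_boxLeTail]
  push_neg
  constructor
  · rintro ⟨y, hy, hB⟩
    exact ⟨y, hy, not_not.mp hB⟩
  · rintro ⟨y, hy, hB⟩
    exact ⟨y, hy, fun h => h hB⟩

end Helpers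

section ProdHelpers

variable {n : ℕ} (Fs : Fin (n+1) → Frame 1)

/-- update the first coordinate. -/
def upd0 (u : (prodFrame Fs).W) (b : (Fs 0).W) : (prodFrame Fs).W :=
  Fin.cases b (fun i => u i.succ)

theorem upd0_zero (u : (prodFrame Fs).W) (b : (Fs 0).W) : upd0 Fs u b 0 = b := rfl

theorem upd0_succ (u : (prodFrame Fs).W) (b : (Fs 0).W) (i : Fin n) :
    upd0 Fs u b i.succ = u i.succ := rfl

theorem upd0_self (u : (prodFrame Fs).W) : upd0 Fs u (u 0) = u := by
  funext i
  induction i using Fin.cases with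
  | zero => rfl
  | succ i => rfl

theorem rleAll_coord0 {k : ℕ} {u x : (prodFrame Fs).W}
    (h : RleAll (prodFrame Fs) k u x) : RleAll (Fs 0) k (u 0) (x 0) := by
  induction k generalizing u with
  | zero => cases h; exact rfl
  | succ k ih =>
      rcases h with h | ⟨i, z, hiz, hz⟩
      · exact Or.inl (ih h)
      · induction i using Fin.cases with
        | zero => exact Or.inr ⟨0, z 0, hiz.1, ih hz⟩
        | succ j =>
            have h0 : u 0 = z 0 := hiz.2 0 (by simp [Fin.succ_ne_zero, Ne, eq_comm])
            rw [h0]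
            exact Or.inl (ih hz)

theorem rleAll_upd0 {k : ℕ} {b : (Fs 0).W} :
    ∀ u : (prodFrame Fs).W, RleAll (Fs 0) k (u 0) b →
      RleAll (prodFrame Fs) k u (upd0 Fs u b) := by
  induction k with
  | zero =>
      intro u h
      cases h
      exact (upd0_self Fs u).symm
  | succ k ih =>
      intro u h
      rcases h with h | ⟨i, z, hiz, hz⟩
      · exact Or.inl (ih u h)
      · obtain rfl : i = 0 := Subsingleton.elim i 0
        have hstep : (prodFrame Fs).R 0 u (upd0 Fs u z) := by
          refine ⟨hiz, ?_⟩
          intro j hj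
          induction j using Fin.cases with
          | zero => exact absurd rfl hj
          | succ j => rfl
        have h2 := ih (upd0 Fs u z) hz
        have : upd0 Fs (upd0 Fs u z) b = upd0 Fs u b := by
          funext i
          induction i using Fin.cases with
          | zero => rfl
          | succ i => rfl
        rw [this] at h2
        exact Or.inr ⟨0, upd0 Fs u z, hstep, h2⟩

theorem rleTail_upd0 {k : ℕ} :
    ∀ {u x : (prodFrame Fs).W}, RleAll (prodFrame Fs) k u x →
      RleTail (prodFrame Fs) k (upd0 Fs u (x 0)) x := by
  induction k with
  | zero =>
      intro u x h
      cases h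
      exact upd0_self Fs u
  | succ k ih =>
      intro u x h
      rcases h with h | ⟨i, z, hiz, hz⟩
      · exact Or.inl (ih h)
      · induction i using Fin.cases with
        | zero =>
            have : upd0 Fs u (x 0) = upd0 Fs z (x 0) := by
              funext j
              induction j using Fin.cases with
              | zero => rfl
              | succ j =>
                  have := hiz.2 j.succ (Fin.succ_ne_zero j)
                  simpa [upd0_succ] using this
            rw [this]
            exact Or.inl (ih hz)
        | succ j =>
            have h0 : u 0 = z 0 := hiz.2 0 (by simp [Fin.succ_ne_zero, Ne, eq_comm])
            refine Or.inr ⟨j, upd0 Fs z (x 0), ?_, ih hz⟩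
            refine ⟨hiz.1, ?_⟩
            intro l hl
            induction l using Fin.cases with
            | zero => rfl
            | succ l =>
                have := hiz.2 l.succ hl
                simpa [upd0_succ] using this

theorem sat_B_of_same0 (m d : ℕ) (v : ℕ → Set (prodFrame Fs).W) (u : (prodFrame Fs).W)
    (hA2 : Sat (prodFrame Fs) v u (boxLe d (.imp (Bf m) (boxLeTail d (Bf m)))))
    (hA3 : Sat (prodFrame Fs) v u (boxLe d (.imp (diaLeTail d (Bf m)) (Bf m))))
    {x z : (prodFrame Fs).W} (hx : RleAll (prodFrame Fs) d u x)
    (hz : RleAll (prodFrame Fs) d u z) (h0 : x 0 = z 0)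
    (hB : Sat (prodFrame Fs) v z (Bf m)) : Sat (prodFrame Fs) v x (Bf m) := by
  set w := upd0 Fs u (x 0) with hw
  have hw1 : RleAll (prodFrame Fs) d u w := rleAll_upd0 Fs u (rleAll_coord0 Fs hx)
  have hwx : RleTail (prodFrame Fs) d w x := rleTail_upd0 Fs hx
  have hwz : RleTail (prodFrame Fs) d w z := by
    rw [hw, h0]
    exact rleTail_upd0 Fs hz
  have hwB : Sat (prodFrame Fs) v w (Bf m) := by
    have h3 := (sat_boxLe (prodFrame Fs) v d _ u).1 hA3 w hw1
    exact h3 ((sat_diaLeTail (prodFrame Fs) v d (Bf m) w).2 ⟨z, hwz, hB⟩)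
  have h2 := (sat_boxLe (prodFrame Fs) v d _ u).1 hA2 w hw1 hwB
  exact (sat_boxLeTail (prodFrame Fs) v d (Bf m) w).1 h2 x hwx

end ProdHelpers

end ModalProducts
namespace ModalProducts

section TruthLemma

variable {n : ℕ} (Fs : Fin (n+1) → Frame 1) (m d : ℕ) (v : ℕ → Set (prodFrame Fs).W)
  (u : (prodFrame Fs).W) (hS : (restrSet Fs m d v u).Nonempty)

theorem emb_mk (x : (prodFrame Fs).W) (hx : x 0 ∈ restrSet Fs m d v u) :
    restrEmb Fs m d v u hS (mkRestrPt Fs m d v u hS x hx) = x := by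
  funext i
  induction i using Fin.cases with
  | zero => rfl
  | succ i => rfl

theorem embR (i : Fin (n+1)) (x' y' : (restrFrame Fs m d v u hS).W) :
    (restrFrame Fs m d v u hS).R i x' y' ↔
      (prodFrame Fs).R i (restrEmb Fs m d v u hS x') (restrEmb Fs m d v u hS y') := by
  induction i using Fin.cases with
  | zero =>
      constructor
      · rintro ⟨h1, h2⟩
        refine ⟨h1, ?_⟩
        intro j hj
        induction j using Fin.cases with
        | zero => exact absurd rfl hj
        | succ l => exact h2 l.succ hj
      · rintro ⟨h1, h2⟩
        refine ⟨h1, ?_⟩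
        intro j hj
        induction j using Fin.cases with
        | zero => exact absurd rfl hj
        | succ l => exact h2 l.succ hj
  | succ i =>
      constructor
      · rintro ⟨h1, h2⟩
        refine ⟨h1, ?_⟩
        intro j hj
        induction j using Fin.cases with
        | zero => exact congrArg Subtype.val (h2 0 hj)
        | succ l => exact h2 l.succ hj
      · rintro ⟨h1, h2⟩
        refine ⟨h1, ?_⟩
        intro j hj
        induction j using Fin.cases with
        | zero => exact Subtype.ext (h2 0 hj)
        | succ l => exact h2 l.succ hj

theorem truth_lemma (v' : ℕ → Set (restrFrame Fs m d v u hS).W)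
    (hv' : ∀ k, 1 ≤ k → k ≤ m →
      v' k = {y | Sat (prodFrame Fs) v (restrEmb Fs m d v u hS y) (betaF k)})
    (hA2 : Sat (prodFrame Fs) v u (boxLe d (.imp (Bf m) (boxLeTail d (Bf m)))))
    (hA3 : Sat (prodFrame Fs) v u (boxLe d (.imp (diaLeTail d (Bf m)) (Bf m)))) :
    ∀ ψ : MF (n+1), (∀ q ∈ ψ.vars, 1 ≤ q ∧ q ≤ m) → ∀ k, ψ.md + k ≤ d →
      ∀ x' : (restrFrame Fs m d v u hS).W,
        RleAll (prodFrame Fs) k u (restrEmb Fs m d v u hS x') →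
        Sat (prodFrame Fs) v (restrEmb Fs m d v u hS x') (Bf m) →
        (Sat (restrFrame Fs m d v u hS) v' x' ψ ↔
          Sat (prodFrame Fs) v (restrEmb Fs m d v u hS x') (sigmaT m ψ)) := by
  intro ψ
  induction ψ with
  | var q =>
      intro hq k hk x' hr hB
      obtain ⟨h1, h2⟩ := hq q rfl
      show x' ∈ v' q ↔ _
      rw [hv' q h1 h2]
      exact Iff.rfl
  | bot => intro _ _ _ _ _ _; exact Iff.rfl
  | and φ ψ ihφ ihψ =>
      intro hq k hk x' hr hB
      simp only [MF.md] at hk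
      have hkφ : φ.md + k ≤ d := le_trans (Nat.add_le_add_right (le_max_left _ _) k) hk
      have hkψ : ψ.md + k ≤ d := le_trans (Nat.add_le_add_right (le_max_right _ _) k) hk
      exact and_congr
        (ihφ (fun q h => hq q (Set.mem_union_left _ h)) k hkφ x' hr hB)
        (ihψ (fun q h => hq q (Set.mem_union_right _ h)) k hkψ x' hr hB)
  | or φ ψ ihφ ihψ =>
      intro hq k hk x' hr hB
      simp only [MF.md] at hk
      have hkφ : φ.md + k ≤ d := le_trans (Nat.add_le_add_right (le_max_left _ _) k) hk
      have hkψ : ψ.md + k ≤ d := le_trans (Nat.add_le_add_right (le_max_right _ _) k) hk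
      exact or_congr
        (ihφ (fun q h => hq q (Set.mem_union_left _ h)) k hkφ x' hr hB)
        (ihψ (fun q h => hq q (Set.mem_union_right _ h)) k hkψ x' hr hB)
  | imp φ ψ ihφ ihψ =>
      intro hq k hk x' hr hB
      simp only [MF.md] at hk
      have hkφ : φ.md + k ≤ d := le_trans (Nat.add_le_add_right (le_max_left _ _) k) hk
      have hkψ : ψ.md + k ≤ d := le_trans (Nat.add_le_add_right (le_max_right _ _) k) hk
      exact imp_congr
        (ihφ (fun q h => hq q (Set.mem_union_left _ h)) k hkφ x' hr hB)
        (ihψ (fun q h => hq q (Set.mem_union_right _ h)) k hkψ x' hr hB)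
  | box i φ ih =>
      intro hq k hk x' hr hB
      simp only [MF.md] at hk
      have hk' : φ.md + (k+1) ≤ d := by omega
      have hkd : k + 1 ≤ d := by omega
      constructor
      · intro h y hRy hyB
        have hyreach : RleAll (prodFrame Fs) (k+1) u y :=
          rleAll_snoc (prodFrame Fs) i hr hRy
        have hy0 : y 0 ∈ restrSet Fs m d v u := by
          induction i using Fin.cases with
          | zero => exact ⟨y, rfl, hyB, rleAll_le (prodFrame Fs) hkd hyreach⟩
          | succ j =>
              have h0 : restrEmb Fs m d v u hS x' 0 = y 0 :=
                hRy.2 0 (by simp [Ne, eq_comm, Fin.succ_ne_zero])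
              rw [← h0]
              exact (x' 0).2
        have hemb : restrEmb Fs m d v u hS (mkRestrPt Fs m d v u hS y hy0) = y :=
          emb_mk Fs m d v u hS y hy0
        have hR' : (restrFrame Fs m d v u hS).R i x' (mkRestrPt Fs m d v u hS y hy0) :=
          (embR Fs m d v u hS i x' _).2 (by rw [hemb]; exact hRy)
        have hres := (ih hq (k+1) hk' _ (by rw [hemb]; exact hyreach)
          (by rw [hemb]; exact hyB)).1 (h _ hR')
        rw [hemb] at hres
        exact hres
      · intro h y' hR'
        have hRy : (prodFrame Fs).R i (restrEmb Fs m d v u hS x')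
            (restrEmb Fs m d v u hS y') := (embR Fs m d v u hS i x' y').1 hR'
        have hyreach : RleAll (prodFrame Fs) (k+1) u (restrEmb Fs m d v u hS y') :=
          rleAll_snoc (prodFrame Fs) i hr hRy
        have hyB : Sat (prodFrame Fs) v (restrEmb Fs m d v u hS y') (Bf m) := by
          induction i using Fin.cases with
          | zero =>
              obtain ⟨z, hz0, hzB, hzr⟩ := (y' 0).2
              exact sat_B_of_same0 Fs m d v u hA2 hA3
                (rleAll_le (prodFrame Fs) hkd hyreach) hzr hz0.symm hzB
          | succ j =>
              have h2 := (sat_boxLe (prodFrame Fs) v d _ u).1 hA2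
                (restrEmb Fs m d v u hS x')
                (rleAll_le (prodFrame Fs) (le_trans (Nat.le_succ k) hkd) hr) hB
              exact (sat_boxLeTail (prodFrame Fs) v d (Bf m) _).1 h2 _
                (rleTail_single (prodFrame Fs) (le_trans (Nat.succ_le_succ (Nat.zero_le k)) hkd)
                  j hRy)
        exact (ih hq (k+1) hk' y' hyreach hyB).2 (h _ hRy hyB)

end TruthLemma

end ModalProducts
open ModalProducts

/-- In the construction for direction (⇒) of Lemma 3.1: if moreover `𝔉, ū ⊭ᵛ σ(φ)`, then
`u₁ ∈ W′₁` (so `ū ∈ W̄′`), the frame `𝔉′₁` is reflexive, `𝔉′, ū ⊭^{v′} φ`, and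
consequently `φ` is refuted in a product of a reflexive 1-frame with `𝔉₂, …, 𝔉ₙ`. -/
theorem refutation_in_restricted_frame (n m : ℕ) (φ : MF (n+1))
    (hvars : ∀ q ∈ φ.vars, 1 ≤ q ∧ q ≤ m)
    (Fs : Fin (n+1) → Frame 1) (hrefl : ReflexiveFrame (Fs 0))
    (v : ℕ → Set (prodFrame Fs).W)
    (u : (prodFrame Fs).W) (hA : Sat (prodFrame Fs) v u (Af m φ))
    (hσ : ¬ Sat (prodFrame Fs) v u (sigmaT m φ))
    (hS : (restrSet Fs m φ.md v u).Nonempty)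
    (v' : ℕ → Set (restrFrame Fs m φ.md v u hS).W)
    (hv' : ∀ k, 1 ≤ k → k ≤ m →
      v' k = {y | Sat (prodFrame Fs) v (restrEmb Fs m φ.md v u hS y) (betaF k)}) :
    u 0 ∈ restrSet Fs m φ.md v u ∧
    ReflexiveFrame (subFrame1 (Fs 0) (restrSet Fs m φ.md v u) hS) ∧
    (∀ hu : u 0 ∈ restrSet Fs m φ.md v u,
      ¬ Sat (restrFrame Fs m φ.md v u hS) v' (mkRestrPt Fs m φ.md v u hS u hu) φ) ∧
    (∃ G : Frame 1, ReflexiveFrame G ∧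
      ∃ (vv : ℕ → Set (prodFrame (Fin.cases (motive := fun _ => Frame 1) G
              (fun i => Fs i.succ))).W)
        (w : (prodFrame (Fin.cases (motive := fun _ => Frame 1) G
              (fun i => Fs i.succ))).W),
        ¬ Sat (prodFrame (Fin.cases (motive := fun _ => Frame 1) G (fun i => Fs i.succ)))
            vv w φ) := by

  have hBu : Sat (prodFrame Fs) v u (Bf m) := hA.1
  have hA2 : Sat (prodFrame Fs) v u
      (boxLe φ.md (.imp (Bf m) (boxLeTail φ.md (Bf m)))) := hA.2.1
  have hA3 : Sat (prodFrame Fs) v u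
      (boxLe φ.md (.imp (diaLeTail φ.md (Bf m)) (Bf m))) := hA.2.2
  have hu0 : u 0 ∈ restrSet Fs m φ.md v u :=
    ⟨u, rfl, hBu, rleAll_refl (prodFrame Fs) φ.md u⟩
  have hrefl' : ReflexiveFrame (subFrame1 (Fs 0) (restrSet Fs m φ.md v u) hS) :=
    fun x => hrefl x.val
  have hmain : ∀ hu : u 0 ∈ restrSet Fs m φ.md v u,
      ¬ Sat (restrFrame Fs m φ.md v u hS) v' (mkRestrPt Fs m φ.md v u hS u hu) φ := by
    intro hu hsat
    have hemb : restrEmb Fs m φ.md v u hS (mkRestrPt Fs m φ.md v u hS u hu) = u :=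
      emb_mk Fs m φ.md v u hS u hu
    have := (truth_lemma Fs m φ.md v u hS v' hv' hA2 hA3 φ hvars 0 (by omega)
      (mkRestrPt Fs m φ.md v u hS u hu) (by rw [hemb]; exact rleAll_refl _ 0 u)
      (by rw [hemb]; exact hBu)).1 hsat
    rw [hemb] at this
    exact hσ this
  refine ⟨hu0, hrefl', hmain, ?_⟩
  exact ⟨subFrame1 (Fs 0) (restrSet Fs m φ.md v u) hS, hrefl', v',
    mkRestrPt Fs m φ.md v u hS u hu0, hmain hu0⟩
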